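/- Every finite ring has left stable range 1: if p, q ∈ R satisfy Rp + Rq = R, then there exists t ∈ R such that tp + q is a unit of R. -/

import Mathlib

namespace FiniteStableRangeAux

universe u

/-- In a finite monoid, a one-sided inverse is two-sided. -/
lemma finUnit {M : Type*} [Monoid M] [Finite M] {a b : M} (h : a * b = 1) : IsUnit b := by
  have hinj : Function.Injective (fun x : M => x * a) := by
    intro x y hxy
    have := congrArg (· * b) hxy
    simpa [mul_assoc, h] using this
  obtain ⟨c, hc⟩ := (Finite.injective_iff_surjective.mp hinj) 1
  simp only at hc
  have hbc : b = c := by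
    calc b = 1 * b := (one_mul b).symm
    _ = (c * a) * b := by rw [hc]
    _ = c * (a * b) := by rw [mul_assoc]
    _ = c := by rw [h, mul_one]
  exact ⟨⟨b, a, by rw [hbc]; exact hc, h⟩, rfl⟩

variable {R : Type u} [Ring R] [Finite R]

local instance : Finite (Submodule R R) :=
  Finite.of_injective (fun N => (N : Set R)) SetLike.coe_injective

lemma jacUnit [Finite R] {j : R} (hj : j ∈ Ideal.jacobson (⊥ : Ideal R)) :
    IsUnit (1 + j) := by
  obtain ⟨z, hz⟩ := Ideal.mem_jacobson_iff.mp hj 1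
  rw [Ideal.mem_bot] at hz
  have hz' : z * j + z - 1 = 0 := by rw [mul_one] at hz; exact hz
  have : z * (1 + j) = 1 := by
    rw [mul_add, mul_one, add_comm]
    have := sub_eq_zero.mp hz'
    rw [this]
  exact finUnit this

lemma card_lt_of_lt [Finite R] {N M : Submodule R R} (h : N < M) :
    Nat.card N < Nat.card M := by
  have h1 : Nat.card N = (N : Set R).ncard := Nat.card_coe_set_eq _
  have h2 : Nat.card M = (M : Set R).ncard := Nat.card_coe_set_eq _
  rw [h1, h2]
  exact Set.ncard_lt_ncard (SetLike.coe_ssubset_coe.mpr h) (Set.toFinite _)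

lemma card_le_of_le [Finite R] {N M : Submodule R R} (h : N ≤ M) :
    Nat.card N ≤ Nat.card M :=
  Nat.card_le_card_of_injective (Submodule.inclusion h) (Submodule.inclusion_injective h)

lemma card_bot' : Nat.card (⊥ : Submodule R R) = 1 := by
  rw [Nat.card_eq_one_iff_unique]
  exact ⟨⟨fun x y => Subtype.ext (by
    rw [(Submodule.mem_bot R).mp x.2, (Submodule.mem_bot R).mp y.2])⟩, ⟨0⟩⟩

lemma two_le_card [Finite R] {N : Submodule R R} (h : N ≠ ⊥) : 2 ≤ Nat.card N := by
  have := card_lt_of_lt (bot_lt_iff_ne_bot.mpr h)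
  rw [card_bot'] at this
  omega

lemma card_sup [Finite R] {N M : Submodule R R} (h : N ⊓ M = ⊥) :
    Nat.card (N ⊔ M : Submodule R R) = Nat.card N * Nat.card M := by
  rw [← Nat.card_prod]
  refine (Nat.card_eq_of_bijective (fun x : N × M => (⟨x.1 + x.2,
    Submodule.add_mem_sup x.1.2 x.2.2⟩ : (N ⊔ M : Submodule R R))) ?_).symm
  constructor
  · rintro ⟨⟨x1, h1⟩, ⟨x2, h2⟩⟩ ⟨⟨y1, g1⟩, ⟨y2, g2⟩⟩ hxy
    have hxy' : x1 + x2 = y1 + y2 := congrArg Subtype.val hxy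
    have hkey : x1 - y1 = y2 - x2 := by
      rw [sub_eq_sub_iff_add_eq_add, hxy', add_comm]
    have hmem : x1 - y1 ∈ N ⊓ M := by
      constructor
      · exact Submodule.sub_mem _ h1 g1
      · rw [hkey]; exact Submodule.sub_mem _ g2 h2
    rw [h, Submodule.mem_bot] at hmem
    have e1 : x1 = y1 := sub_eq_zero.mp hmem
    have e2 : x2 = y2 := by
      apply add_left_cancel (a := x1)
      rw [hxy', e1]
    simp [e1, e2]
  · rintro ⟨z, hz⟩
    obtain ⟨y, hy, w, hw, hyw⟩ := Submodule.mem_sup.mp hz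
    exact ⟨(⟨y, hy⟩, ⟨w, hw⟩), by simp [hyw]⟩

lemma card_compl [Finite R] {N C : Submodule R R} (h1 : N ⊓ C = ⊥) (h2 : N ⊔ C = ⊤) :
    Nat.card N * Nat.card C = Nat.card R := by
  rw [← card_sup h1, h2]
  exact Nat.card_congr (Equiv.subtypeUnivEquiv (by simp))

lemma exists_compl_of_jac [Finite R] (hJ : Ideal.jacobson (⊥ : Ideal R) = ⊥)
    (N : Ideal R) : ∃ C : Ideal R, N ⊓ C = ⊥ ∧ N ⊔ C = ⊤ := by
  classical
  obtain ⟨C, hC, hmin⟩ := Set.Finite.exists_minimalFor (fun C : Ideal R => Nat.card C)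
    {C : Ideal R | N ⊔ C = ⊤} (Set.toFinite _) ⟨⊤, by simp⟩
  refine ⟨C, ?_, hC⟩
  by_contra hne
  obtain ⟨x, hxNC, hx0⟩ := Submodule.exists_mem_ne_zero_of_ne_bot hne
  -- find a maximal left ideal avoiding x
  have hxJ : x ∉ Ideal.jacobson (⊥ : Ideal R) := by rw [hJ]; simpa using hx0
  have : ∃ m : Ideal R, m.IsMaximal ∧ x ∉ m := by
    by_contra hall
    push_neg at hall
    apply hxJ
    rw [Ideal.jacobson]
    rw [Ideal.mem_sInf]
    rintro J ⟨-, hJm⟩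
    exact hall J hJm
  obtain ⟨m, hm, hxm⟩ := this
  -- C ⊓ m is a smaller element of the set
  have hsup : m ⊔ (N ⊓ C) = ⊤ := by
    refine hm.1.2 _ (lt_of_le_of_ne le_sup_left ?_)
    intro hEq
    exact hxm (hEq ▸ (le_sup_right : N ⊓ C ≤ m ⊔ (N ⊓ C)) hxNC)
  have hCeq : ((N ⊓ C) ⊔ (m ⊓ C) : Ideal R) = C := by
    have := sup_inf_assoc_of_le (x := N ⊓ C) m (inf_le_right : N ⊓ C ≤ C)
    rw [← this, sup_comm (N ⊓ C) m, hsup, top_inf_eq]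
  have habs : N ⊔ (N ⊓ C) = N := sup_eq_left.mpr (inf_le_left : N ⊓ C ≤ N)
  have hmem : N ⊔ (C ⊓ m) = ⊤ := by
    calc N ⊔ (C ⊓ m) = N ⊔ (m ⊓ C) := by rw [inf_comm]
      _ = (N ⊔ (N ⊓ C)) ⊔ (m ⊓ C) := by rw [habs]
      _ = N ⊔ ((N ⊓ C) ⊔ (m ⊓ C)) := by rw [sup_assoc]
      _ = N ⊔ C := by rw [hCeq]
      _ = ⊤ := hC
  have hlt : Nat.card (C ⊓ m : Ideal R) < Nat.card C := by
    apply card_lt_of_lt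
    refine lt_of_le_of_ne inf_le_left ?_
    intro hEq
    have hxC : x ∈ C := (Submodule.mem_inf.mp hxNC).2
    rw [← hEq] at hxC
    exact hxm (Submodule.mem_inf.mp hxC).2
  exact absurd (hmin hmem hlt.le) (not_le.mpr hlt)

/-- every nonzero left ideal contains a minimal (atomic) one -/

lemma exists_atom_le [Finite R] {A : Ideal R} (hA : A ≠ ⊥) :
    ∃ S : Ideal R, S ≤ A ∧ S ≠ ⊥ ∧ ∀ B : Ideal R, B ≤ S → B = ⊥ ∨ B = S := by
  classical
  obtain ⟨S, ⟨hSA, hS0⟩, hmin⟩ := Set.Finite.exists_minimalFor (fun C : Ideal R => Nat.card C)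
    {C : Ideal R | C ≤ A ∧ C ≠ ⊥} (Set.toFinite _) ⟨A, le_refl _, hA⟩
  refine ⟨S, hSA, hS0, fun B hBS => ?_⟩
  by_cases hB0 : B = ⊥
  · exact Or.inl hB0
  · right
    by_contra hBne
    have hlt : Nat.card B < Nat.card S := card_lt_of_lt (lt_of_le_of_ne hBS hBne)
    exact absurd (hmin ⟨hBS.trans hSA, hB0⟩ hlt.le) (not_le.mpr hlt)

/-- A two-sided ideal is generated by a central idempotent (when J(R)=0). -/

lemma central_of_twoSided [Finite R] (hJ : Ideal.jacobson (⊥ : Ideal R) = ⊥)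
    (I : Ideal R) (hI : ∀ x ∈ I, ∀ r : R, x * r ∈ I) :
    ∃ e : R, IsIdempotentElem e ∧ (∀ r : R, e * r = r * e) ∧ I = Ideal.span {e} := by
  obtain ⟨C, hIC, hICt⟩ := exists_compl_of_jac hJ I
  have h1 : (1 : R) ∈ I ⊔ C := hICt ▸ Submodule.mem_top
  obtain ⟨e, he, f, hf, hef1⟩ := Submodule.mem_sup.mp h1
  have huniq : ∀ x y : R, x ∈ I → y ∈ C → x + y = 0 → x = 0 ∧ y = 0 := by
    intro x y hx hy hxy
    have hxIC : x ∈ I ⊓ C := ⟨hx, by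
      have : x = -y := by rw [eq_neg_iff_add_eq_zero]; exact hxy
      rw [this]; exact Submodule.neg_mem _ hy⟩
    rw [hIC, Submodule.mem_bot] at hxIC
    constructor
    · exact hxIC
    · rw [hxIC, zero_add] at hxy; exact hxy
  have key1 : ∀ x ∈ I, x * e = x ∧ x * f = 0 := by
    intro x hx
    have hxe : x * e ∈ I := Submodule.smul_mem _ x he
    have hxf : x * f ∈ C := Submodule.smul_mem _ x hf
    have : (x * e - x) + x * f = 0 := by
      have : x * e + x * f = x := by rw [← mul_add, hef1, mul_one]
      rw [sub_add_eq_add_sub, this, sub_self]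
    obtain ⟨h1', h2'⟩ := huniq _ _ (Submodule.sub_mem _ hxe hx) hxf this
    exact ⟨sub_eq_zero.mp h1', h2'⟩
  have key2 : ∀ c ∈ C, c * e = 0 ∧ c * f = c := by
    intro c hc
    have hce : c * e ∈ I := Submodule.smul_mem _ c he
    have hcf : c * f ∈ C := Submodule.smul_mem _ c hf
    have : c * e + (c * f - c) = 0 := by
      have : c * e + c * f = c := by rw [← mul_add, hef1, mul_one]
      rw [← add_sub_assoc, this, sub_self]
    obtain ⟨h1', h2'⟩ := huniq _ _ hce (Submodule.sub_mem _ hcf hc) this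
    exact ⟨h1', sub_eq_zero.mp h2'⟩
  have hee : e * e = e := (key1 e he).1
  have hfe : f * e = 0 := (key2 f hf).1
  have hf1e : f = 1 - e := by rw [eq_sub_iff_add_eq, add_comm]; exact hef1
  have hef : e * f = 0 := by rw [hf1e, mul_sub, mul_one, hee, sub_self]
  -- step1 : e*r = e*r*e
  have step1 : ∀ r : R, e * r * e = e * r := fun r => (key1 _ (hI e he r)).1
  -- central
  have central : ∀ r : R, e * r = r * e := by
    intro r
    set x := r * e - e * (r * e) with hxdef
    have hxI : x ∈ I := Submodule.sub_mem _ (Submodule.smul_mem _ r he)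
      (Submodule.smul_mem _ e (Submodule.smul_mem _ r he))
    have hxf : x = f * (r * e) := by
      rw [hf1e, sub_mul, one_mul, hxdef]
    have hnil : ∀ r' : R, x * r' * x = 0 := by
      intro r'
      have h0 : e * r' * f = 0 := by
        rw [hf1e, mul_sub, mul_one, step1, sub_self]
      rw [hxf]
      calc f * (r * e) * r' * (f * (r * e))
          = f * (r * ((e * r' * f) * (r * e))) := by
            simp only [mul_assoc]
        _ = 0 := by rw [h0, zero_mul, mul_zero, mul_zero]
    have hxJ : x ∈ Ideal.jacobson (⊥ : Ideal R) := by
      rw [Ideal.jacobson, Ideal.mem_sInf]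
      rintro m ⟨-, hm⟩
      by_contra hxm
      have hsup : m ⊔ Ideal.span {x} = ⊤ := by
        refine hm.1.2 _ (lt_of_le_of_ne le_sup_left ?_)
        intro hEq
        exact hxm (hEq ▸ (le_sup_right : Ideal.span {x} ≤ _)
          (Submodule.mem_span_singleton_self x))
      have h1m : (1 : R) ∈ m ⊔ Ideal.span {x} := hsup ▸ Submodule.mem_top
      obtain ⟨v, hv, u, hu, hvu⟩ := Submodule.mem_sup.mp h1m
      obtain ⟨r'', hr''⟩ := Submodule.mem_span_singleton.mp hu
      have huu : u * u = 0 := by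
        rw [← hr'']
        show r'' * x * (r'' * x) = 0
        calc r'' * x * (r'' * x) = r'' * (x * r'' * x) := by simp only [mul_assoc]
        _ = 0 := by rw [hnil, mul_zero]
      have hone : (1 + u) * v = 1 := by
        have hv1 : v = 1 - u := by
          rw [eq_sub_iff_add_eq, add_comm]
          rw [add_comm] at hvu; exact hvu
        have hexp : (1 + u) * (1 - u) = 1 - u * u := by noncomm_ring
        rw [hv1, hexp, huu, sub_zero]
      have : (1 : R) ∈ m := by
        rw [← hone]
        exact Submodule.smul_mem _ (1 + u) hv
      exact hm.1.1 ((Ideal.eq_top_iff_one m).mpr this)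
    rw [hJ, Submodule.mem_bot] at hxJ
    -- x = 0 : r*e = e*(r*e) = e*r (using step1)
    have hre : r * e = e * (r * e) := by
      have := sub_eq_zero.mp hxJ
      exact this
    rw [hre, ← mul_assoc, step1]
  refine ⟨e, hee, central, le_antisymm ?_ ?_⟩
  · intro a ha
    rw [Ideal.mem_span_singleton']
    exact ⟨a, (key1 a ha).1⟩
  · rw [Ideal.span_le]
    simpa using he

lemma atoms_hom (hJ : Ideal.jacobson (⊥ : Ideal R) = ⊥)
    (hcen : ∀ e : R, IsIdempotentElem e → (∀ r : R, e * r = r * e) → e = 0 ∨ e = 1)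
    {S₁ S₂ : Ideal R} (hS₁0 : S₁ ≠ ⊥) (hS₂0 : S₂ ≠ ⊥)
    (hS₁a : ∀ B : Ideal R, B ≤ S₁ → B = ⊥ ∨ B = S₁) :
    ∃ ψ : R →ₗ[R] R, (∀ x ∈ S₁, ψ x ∈ S₂) ∧ (∀ x ∈ S₁, ψ x = 0 → x = 0) := by
  -- the two-sided ideal generated by S₁
  set τ : Ideal R := ⨆ w : R, Submodule.map (LinearMap.toSpanSingleton R R w) S₁ with hτ
  have hτ_two : ∀ x ∈ τ, ∀ r : R, x * r ∈ τ := by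
    intro x hx r
    refine Submodule.iSup_induction (motive := fun x => x * r ∈ τ)
      (p := fun w : R => Submodule.map (LinearMap.toSpanSingleton R R w) S₁) hx ?_ (by simp) ?_
    · rintro w y hy
      obtain ⟨s, hs, rfl⟩ := hy
      have : LinearMap.toSpanSingleton R R w s * r
          = LinearMap.toSpanSingleton R R (w * r) s := by
        simp [LinearMap.toSpanSingleton_apply, smul_eq_mul, mul_assoc]
      rw [this]
      exact Submodule.mem_iSup_of_mem (w * r) ⟨s, hs, rfl⟩
    · intro y z hy hz
      rw [add_mul]
      exact Submodule.add_mem _ hy hz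
  have hS₁τ : S₁ ≤ τ := by
    intro s hs
    refine Submodule.mem_iSup_of_mem 1 ⟨s, hs, ?_⟩
    simp [LinearMap.toSpanSingleton_apply]
  have hτ0 : τ ≠ ⊥ := by
    intro h
    exact hS₁0 (le_bot_iff.mp (h ▸ hS₁τ))
  obtain ⟨e, he_idem, he_cen, he_span⟩ := central_of_twoSided hJ τ hτ_two
  have hτtop : τ = ⊤ := by
    rcases hcen e he_idem he_cen with rfl | rfl
    · exfalso; apply hτ0; rw [he_span]; simp
    · rw [he_span, Ideal.span_singleton_one]
  -- projection onto S₂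
  obtain ⟨C₂, hC₂1, hC₂2⟩ := exists_compl_of_jac hJ S₂
  have hcompl : IsCompl S₂ C₂ := IsCompl.of_eq hC₂1 hC₂2
  set π : R →ₗ[R] R := S₂.subtype.comp (S₂.projectionOnto C₂ hcompl) with hπ
  have hπ_mem : ∀ y : R, π y ∈ S₂ := fun y => SetLike.coe_mem _
  have hπ_id : ∀ y ∈ S₂, π y = y := by
    intro y hy
    have := Submodule.projectionOnto_apply_left hcompl ⟨y, hy⟩
    simp only [hπ, LinearMap.comp_apply]
    rw [this]
    rfl
  by_cases hK : ∀ w : R, ∀ x ∈ S₁, π (x * w) = 0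
  · exfalso
    have hπ_zero : ∀ y : R, π y = 0 := by
      intro y
      have hy : y ∈ τ := hτtop ▸ Submodule.mem_top
      refine Submodule.iSup_induction (motive := fun y => π y = 0)
        (p := fun w : R => Submodule.map (LinearMap.toSpanSingleton R R w) S₁) hy ?_ (by simp) ?_
      · rintro w y ⟨s, hs, rfl⟩
        simpa [LinearMap.toSpanSingleton_apply, smul_eq_mul] using hK w s hs
      · intro y z hy hz
        rw [map_add, hy, hz, add_zero]
    obtain ⟨s₀, hs₀, hs₀0⟩ := Submodule.exists_mem_ne_zero_of_ne_bot hS₂0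
    exact hs₀0 (by rw [← hπ_id s₀ hs₀, hπ_zero])
  · push_neg at hK
    obtain ⟨w, x₀, hx₀S, hx₀⟩ := hK
    set ψ : R →ₗ[R] R := π.comp (LinearMap.toSpanSingleton R R w) with hψ
    have hψ_eval : ∀ x : R, ψ x = π (x * w) := by
      intro x; simp [hψ, LinearMap.toSpanSingleton_apply, smul_eq_mul]
    have hker : (LinearMap.ker ψ ⊓ S₁ : Ideal R) = ⊥ := by
      rcases hS₁a (LinearMap.ker ψ ⊓ S₁) inf_le_right with h | h
      · exact h
      · exfalso
        have : x₀ ∈ LinearMap.ker ψ := (h ▸ (inf_le_left : LinearMap.ker ψ ⊓ S₁ ≤ _) :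
          S₁ ≤ LinearMap.ker ψ) hx₀S
        rw [LinearMap.mem_ker, hψ_eval] at this
        exact hx₀ this
    refine ⟨ψ, fun x _ => by rw [hψ_eval]; exact hπ_mem _, fun x hxS hx0 => ?_⟩
    have : x ∈ (LinearMap.ker ψ ⊓ S₁ : Ideal R) := ⟨LinearMap.mem_ker.mpr hx0, hxS⟩
    rw [hker, Submodule.mem_bot] at this
    exact this

lemma card_of_iso {S₁ S₂ : Ideal R} (ψ : R →ₗ[R] R)
    (h1 : ∀ x ∈ S₁, ψ x ∈ S₂) (h2 : ∀ x ∈ S₁, ψ x = 0 → x = 0) :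
    Nat.card S₁ ≤ Nat.card S₂ := by
  apply Nat.card_le_card_of_injective (fun x : S₁ => (⟨ψ x, h1 x x.2⟩ : S₂))
  rintro ⟨x, hx⟩ ⟨y, hy⟩ hxy
  have hxy' : ψ x = ψ y := congrArg Subtype.val hxy
  have : ψ (x - y) = 0 := by rw [map_sub, hxy', sub_self]
  have := h2 _ (Submodule.sub_mem _ hx hy) this
  exact Subtype.ext (sub_eq_zero.mp this)

lemma embed (hJ : Ideal.jacobson (⊥ : Ideal R) = ⊥)
    (hcen : ∀ e : R, IsIdempotentElem e → (∀ r : R, e * r = r * e) → e = 0 ∨ e = 1) :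
    ∀ (n : ℕ) (A D : Ideal R), Nat.card A = n → Nat.card A ≤ Nat.card D →
    ∃ φ : R →ₗ[R] R, (∀ x ∈ A, φ x ∈ D) ∧ (∀ x ∈ A, φ x = 0 → x = 0) := by
  intro n
  induction n using Nat.strong_induction_on with
  | _ n IH =>
  intro A D hcardA hAD
  by_cases hA : A = ⊥
  · refine ⟨0, ?_, ?_⟩
    · intro x hx; simp
    · intro x hx _
      rw [hA, Submodule.mem_bot] at hx
      exact hx
  · have hD : D ≠ ⊥ := by
      intro hD0
      have h2 := two_le_card (N := A) hA
      rw [hD0] at hAD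
      have : Nat.card (⊥ : Submodule R R) = 1 := by
        rw [Nat.card_eq_one_iff_unique]
        exact ⟨⟨fun x y => Subtype.ext (by
          rw [(Submodule.mem_bot R).mp x.2, (Submodule.mem_bot R).mp y.2])⟩, ⟨0⟩⟩
      omega
    obtain ⟨S₁, hS₁A, hS₁0, hS₁a⟩ := exists_atom_le hA
    obtain ⟨S₂, hS₂D, hS₂0, hS₂a⟩ := exists_atom_le hD
    obtain ⟨C₁, hC₁1, hC₁2⟩ := exists_compl_of_jac hJ S₁
    obtain ⟨C₂, hC₂1, hC₂2⟩ := exists_compl_of_jac hJ S₂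
    have hcompl₁ : IsCompl S₁ C₁ := IsCompl.of_eq hC₁1 hC₁2
    set A' : Ideal R := A ⊓ C₁ with hA'def
    set D' : Ideal R := D ⊓ C₂ with hD'def
    have hAeq : S₁ ⊔ A' = A := by
      have := sup_inf_assoc_of_le (x := S₁) C₁ hS₁A
      rw [hC₁2, top_inf_eq] at this
      rw [hA'def, inf_comm A C₁]
      exact this.symm
    have hDeq : S₂ ⊔ D' = D := by
      have := sup_inf_assoc_of_le (x := S₂) C₂ hS₂D
      rw [hC₂2, top_inf_eq] at this
      rw [hD'def, inf_comm D C₂]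
      exact this.symm
    have hS₁A' : S₁ ⊓ A' = ⊥ := by
      rw [← le_bot_iff, ← hC₁1]
      exact le_inf inf_le_left (inf_le_right.trans inf_le_right)
    have hS₂D' : S₂ ⊓ D' = ⊥ := by
      rw [← le_bot_iff, ← hC₂1]
      exact le_inf inf_le_left (inf_le_right.trans inf_le_right)
    have hcardA' : Nat.card A = Nat.card S₁ * Nat.card A' := by
      rw [← hAeq]; exact card_sup hS₁A'
    have hcardD' : Nat.card D = Nat.card S₂ * Nat.card D' := by
      rw [← hDeq]; exact card_sup hS₂D'
    -- S₁ and S₂ have the same size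
    obtain ⟨ψ, hψ1, hψ2⟩ := atoms_hom hJ hcen hS₁0 hS₂0 hS₁a
    obtain ⟨ψ', hψ'1, hψ'2⟩ := atoms_hom hJ hcen hS₂0 hS₁0 hS₂a
    have hcardS : Nat.card S₁ = Nat.card S₂ :=
      le_antisymm (card_of_iso ψ hψ1 hψ2) (card_of_iso ψ' hψ'1 hψ'2)
    have hposS₁ : 0 < Nat.card S₁ := Nat.card_pos
    have hposA' : 0 < Nat.card A' := Nat.card_pos
    have hA'D' : Nat.card A' ≤ Nat.card D' := by
      rw [hcardA', hcardD', ← hcardS] at hAD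
      exact Nat.le_of_mul_le_mul_left hAD hposS₁
    have hA'lt : Nat.card A' < n := by
      rw [← hcardA, hcardA']
      have h2 := two_le_card hS₁0
      nlinarith
    obtain ⟨φ', hφ'1, hφ'2⟩ := IH _ hA'lt A' D' rfl hA'D'
    set P₁ : R →ₗ[R] R := S₁.subtype.comp (S₁.projectionOnto C₁ hcompl₁) with hP₁
    set P₂ : R →ₗ[R] R := C₁.subtype.comp (C₁.projectionOnto S₁ hcompl₁.symm) with hP₂
    have hP_sum : ∀ x : R, P₁ x + P₂ x = x := fun x =>
      Submodule.projection_add_projection_eq_self hcompl₁ x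
    have hP₁S : ∀ x : R, P₁ x ∈ S₁ := fun x => SetLike.coe_mem _
    have hP₂C : ∀ x : R, P₂ x ∈ C₁ := fun x => SetLike.coe_mem _
    have hP₂A' : ∀ x ∈ A, P₂ x ∈ A' := by
      intro x hx
      refine ⟨?_, hP₂C x⟩
      have : P₂ x = x - P₁ x := by rw [eq_sub_iff_add_eq, add_comm]; exact hP_sum x
      rw [this]
      exact Submodule.sub_mem _ hx (hS₁A (hP₁S x))
    refine ⟨ψ.comp P₁ + φ'.comp P₂, ?_, ?_⟩
    · intro x hx
      simp only [LinearMap.add_apply, LinearMap.comp_apply]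
      exact Submodule.add_mem _ (hS₂D (hψ1 _ (hP₁S x))) ((inf_le_left : D ⊓ C₂ ≤ D)
        (hφ'1 _ (hP₂A' x hx)))
    · intro x hx hx0
      simp only [LinearMap.add_apply, LinearMap.comp_apply] at hx0
      have hu : ψ (P₁ x) ∈ S₂ := hψ1 _ (hP₁S x)
      have hv : φ' (P₂ x) ∈ D' := hφ'1 _ (hP₂A' x hx)
      have huv : ψ (P₁ x) ∈ S₂ ⊓ D' := by
        refine ⟨hu, ?_⟩
        have : ψ (P₁ x) = -(φ' (P₂ x)) := by
          rw [eq_neg_iff_add_eq_zero]; exact hx0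
        rw [this]
        exact Submodule.neg_mem _ hv
      rw [hS₂D', Submodule.mem_bot] at huv
      have hv0 : φ' (P₂ x) = 0 := by
        rw [huv, zero_add] at hx0; exact hx0
      have hP₁0 : P₁ x = 0 := hψ2 _ (hP₁S x) huv
      have hP₂0 : P₂ x = 0 := hφ'2 _ (hP₂A' x hx) hv0
      rw [← hP_sum x, hP₁0, hP₂0, add_zero]

lemma caseC (hJ : Ideal.jacobson (⊥ : Ideal R) = ⊥)
    (hcen : ∀ e : R, IsIdempotentElem e → (∀ r : R, e * r = r * e) → e = 0 ∨ e = 1)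
    (p q a b : R) (hab : a * p + b * q = 1) : ∃ t : R, IsUnit (t * p + q) := by
  rcases subsingleton_or_nontrivial R with hsub | hnt
  · exact ⟨0, ⟨1, Subsingleton.elim _ _⟩⟩
  -- setup
  set Rp : Ideal R := Ideal.span {p} with hRp
  set Rq : Ideal R := Ideal.span {q} with hRq
  have hsuptop : Rp ⊔ Rq = ⊤ := by
    rw [eq_top_iff]
    intro x _
    have h' := congrArg (fun y => x * y) hab
    simp only [mul_add, ← mul_assoc, mul_one] at h'
    rw [← h']
    exact Submodule.add_mem _
      (Submodule.mem_sup_left (Ideal.mem_span_singleton'.mpr ⟨x * a, rfl⟩))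
      (Submodule.mem_sup_right (Ideal.mem_span_singleton'.mpr ⟨x * b, rfl⟩))
  set W : Ideal R := Rp ⊓ Rq with hW
  obtain ⟨Cw, hCw1, hCw2⟩ := exists_compl_of_jac hJ W
  set D : Ideal R := Cw ⊓ Rp with hD
  have hDp : D ≤ Rp := inf_le_right
  have hDq : D ⊓ Rq = ⊥ := by
    rw [← le_bot_iff, ← hCw1]
    exact le_inf (le_inf (inf_le_left.trans inf_le_right) inf_le_right)
      (inf_le_left.trans inf_le_left)
  have hRpWD : W ⊔ D = Rp := by
    have := sup_inf_assoc_of_le (x := W) Cw (inf_le_left : W ≤ Rp)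
    rw [hCw2, top_inf_eq] at this
    rw [hD]
    exact this.symm
  have hDsup : D ⊔ Rq = ⊤ := by
    have hWRq : W ⊔ Rq = Rq := sup_eq_right.mpr inf_le_right
    calc D ⊔ Rq = D ⊔ (W ⊔ Rq) := by rw [hWRq]
      _ = (W ⊔ D) ⊔ Rq := by rw [← sup_assoc, sup_comm D W]
      _ = Rp ⊔ Rq := by rw [hRpWD]
      _ = ⊤ := hsuptop
  -- the annihilator of q
  set A : Ideal R := LinearMap.ker (LinearMap.toSpanSingleton R R q) with hA
  have hAmem : ∀ x : R, x ∈ A ↔ x * q = 0 := by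
    intro x
    rw [hA, LinearMap.mem_ker, LinearMap.toSpanSingleton_apply, smul_eq_mul]
  obtain ⟨E, hAE1, hAE2⟩ := exists_compl_of_jac hJ A
  -- E is in bijection with Rq
  have hcardE : Nat.card E = Nat.card Rq := by
    apply Nat.card_eq_of_bijective (fun x : E => (⟨(x : R) * q,
      Ideal.mem_span_singleton'.mpr ⟨(x : R), rfl⟩⟩ : Rq))
    constructor
    · rintro ⟨x, hx⟩ ⟨y, hy⟩ hxy
      have hxy' : x * q = y * q := congrArg Subtype.val hxy
      have : x - y ∈ A ⊓ E := by
        refine ⟨(hAmem _).mpr ?_, Submodule.sub_mem _ hx hy⟩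
        rw [sub_mul, hxy', sub_self]
      rw [hAE1, Submodule.mem_bot] at this
      exact Subtype.ext (sub_eq_zero.mp this)
    · rintro ⟨z, hz⟩
      obtain ⟨r, hr⟩ := Ideal.mem_span_singleton'.mp hz
      have hrtop : r ∈ A ⊔ E := hAE2 ▸ Submodule.mem_top
      obtain ⟨u, hu, v, hv, huv⟩ := Submodule.mem_sup.mp hrtop
      refine ⟨⟨v, hv⟩, Subtype.ext ?_⟩
      show v * q = z
      have : (u + v) * q = z := by rw [huv, hr]
      rw [add_mul, (hAmem u).mp hu, zero_add] at this
      exact this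
  have hcardAD : Nat.card A = Nat.card D := by
    have h1 : Nat.card A * Nat.card E = Nat.card R := card_compl hAE1 hAE2
    have h2 : Nat.card D * Nat.card Rq = Nat.card R := card_compl hDq hDsup
    have hpos : 0 < Nat.card Rq := Nat.card_pos
    rw [hcardE] at h1
    exact Nat.eq_of_mul_eq_mul_right hpos (h1.trans h2.symm)
  obtain ⟨φ, hφ1, hφ2⟩ := embed hJ hcen (Nat.card A) A D rfl (le_of_eq hcardAD)
  have hcomplAE : IsCompl A E := IsCompl.of_eq hAE1 hAE2
  set PA : R →ₗ[R] R := A.subtype.comp (A.projectionOnto E hcomplAE) with hPA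
  have hPAmem : ∀ y : R, PA y ∈ A := fun y => SetLike.coe_mem _
  have hPAid : ∀ x ∈ A, PA x = x := by
    intro x hx
    have := Submodule.projectionOnto_apply_left hcomplAE ⟨x, hx⟩
    simp only [hPA, LinearMap.comp_apply]
    rw [this]
    rfl
  set φ' : R →ₗ[R] R := φ.comp PA with hφ'
  have hφ'D : ∀ y : R, φ' y ∈ D := fun y => hφ1 _ (hPAmem y)
  set w : R := φ' 1 with hw
  obtain ⟨t, ht⟩ := Ideal.mem_span_singleton'.mp (hDp (hφ'D 1))
  -- t * p = w
  refine ⟨t, ?_⟩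
  set x : R := t * p + q with hx
  have hlin : ∀ r : R, φ' r = r * w := by
    intro r
    calc φ' r = φ' (r • 1) := by rw [smul_eq_mul, mul_one]
      _ = r • φ' 1 := map_smul _ _ _
      _ = r * w := by rw [smul_eq_mul, hw]
  have hinj : ∀ r : R, r * x = 0 → r = 0 := by
    intro r hr
    have hsum : r * w + r * q = 0 := by
      rw [hx, mul_add] at hr
      rw [hw, ← ht, ← mul_assoc]
      rw [← mul_assoc] at hr
      exact hr
    have hrwD : r * w ∈ D := by rw [← hlin]; exact hφ'D r
    have hrwq : r * w ∈ Rq := by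
      have : r * w = -(r * q) := by rw [eq_neg_iff_add_eq_zero]; exact hsum
      rw [this]
      exact Submodule.neg_mem _ (Ideal.mem_span_singleton'.mpr ⟨r, rfl⟩)
    have hrw0 : r * w = 0 := by
      have : r * w ∈ D ⊓ Rq := ⟨hrwD, hrwq⟩
      rw [hDq, Submodule.mem_bot] at this
      exact this
    have hrq0 : r * q = 0 := by rw [hrw0, zero_add] at hsum; exact hsum
    have hrA : r ∈ A := (hAmem r).mpr hrq0
    have : φ r = 0 := by
      have := hlin r
      rw [hφ', LinearMap.comp_apply, hPAid r hrA] at this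
      rw [this, hrw0]
    exact hφ2 r hrA this
  have hbij : Function.Surjective (fun r : R => r * x) := by
    apply Finite.injective_iff_surjective.mp
    intro r1 r2 h12
    simp only at h12
    have : (r1 - r2) * x = 0 := by rw [sub_mul, h12, sub_self]
    have := hinj _ this
    exact sub_eq_zero.mp this
  obtain ⟨z, hzx⟩ := hbij 1
  exact finUnit hzx

theorem master : ∀ (n : ℕ) (R : Type u) [Ring R] [Finite R], Nat.card R = n →
    ∀ p q a b : R, a * p + b * q = 1 → ∃ t : R, IsUnit (t * p + q) := by
  intro n
  induction n using Nat.strong_induction_on with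
  | _ n IH =>
  intro R _ _ hcard p q a b hab
  -- generic quotient step
  have step : ∀ T : TwoSidedIdeal R, (∃ j ∈ T, j ≠ 0) →
      ∃ t y : R, y * (t * p + q) - 1 ∈ T := by
    rintro T ⟨j, hjT, hj0⟩
    set c := T.ringCon with hc
    set S := c.Quotient with hS
    haveI : Finite S := Quotient.finite _
    set π : R →+* S := c.mk' with hπ
    have hπs : Function.Surjective π := fun y => Quotient.inductionOn' y fun x => ⟨x, rfl⟩
    have hπk : ∀ x : R, π x = 0 ↔ x ∈ T := by
      intro x
      have h1 : π x = ((x : R) : c.Quotient) := rfl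
      rw [h1, ← RingCon.coe_zero, RingCon.eq]
      exact (TwoSidedIdeal.mem_iff T x).symm
    have hcardS : Nat.card S < n := by
      have hle := Nat.card_le_card_of_surjective π hπs
      rcases lt_or_eq_of_le hle with h | h
      · omega
      · exfalso
        have hbij : Function.Bijective π :=
          (Nat.bijective_iff_surjective_and_card π).mpr ⟨hπs, h.symm⟩
        have : π j = π 0 := by
          rw [map_zero]
          exact (hπk j).mpr hjT
        exact hj0 (hbij.1 this)
    obtain ⟨tb, htb⟩ := IH (Nat.card S) hcardS S rfl (π p) (π q) (π a) (π b)
      (by rw [← map_mul, ← map_mul, ← map_add, hab, map_one])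
    obtain ⟨t, ht⟩ := hπs tb
    have hu : IsUnit (π (t * p + q)) := by
      rw [map_add, map_mul, ht]
      exact htb
    obtain ⟨v, hv⟩ := hu
    obtain ⟨y, hy⟩ := hπs ↑v⁻¹
    refine ⟨t, y, (hπk _).mp ?_⟩
    rw [map_sub, map_mul, map_one, hy, ← hv, Units.inv_mul, sub_self]
  by_cases hcen : ∃ e : R, IsIdempotentElem e ∧ (∀ r : R, e * r = r * e) ∧ e ≠ 0 ∧ e ≠ 1
  · -- decompose via the central idempotent
    obtain ⟨e, he, hec, he0, he1⟩ := hcen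
    set f : R := 1 - e with hfdef
    have hfc : ∀ r : R, f * r = r * f := by
      intro r
      rw [hfdef, sub_mul, mul_sub, one_mul, mul_one, hec r]
    have hef : e * f = 0 := by rw [hfdef, mul_sub, mul_one, he.eq, sub_self]
    have hfe : f * e = 0 := by rw [hfdef, sub_mul, one_mul, he.eq, sub_self]
    have hf0 : f ≠ 0 := by
      rw [hfdef, sub_ne_zero]
      exact fun h => he1 h.symm
    have hspan_two : ∀ g : R, (∀ r : R, g * r = r * g) →
        ∀ {x y : R}, x ∈ Ideal.span {g} → x * y ∈ Ideal.span {g} := by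
      intro g hg x y hx
      obtain ⟨r, hr⟩ := Ideal.mem_span_singleton'.mp hx
      rw [Ideal.mem_span_singleton']
      refine ⟨r * y, ?_⟩
      rw [← hr, mul_assoc, mul_assoc, hg y]
    set T₁ : TwoSidedIdeal R := @Ideal.toTwoSided R _ (Ideal.span {f}) ⟨fun b ha => hspan_two f hfc ha⟩ with hT₁
    set T₂ : TwoSidedIdeal R := @Ideal.toTwoSided R _ (Ideal.span {e}) ⟨fun b ha => hspan_two e hec ha⟩ with hT₂
    obtain ⟨t₁, y₁, h₁⟩ := step T₁ ⟨f, by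
      rw [hT₁, @Ideal.mem_toTwoSided R _ (Ideal.span {f}) ⟨fun b ha => hspan_two f hfc ha⟩ _]
      exact Ideal.mem_span_singleton'.mpr ⟨1, one_mul f⟩, hf0⟩
    obtain ⟨t₂, y₂, h₂⟩ := step T₂ ⟨e, by
      rw [hT₂, @Ideal.mem_toTwoSided R _ (Ideal.span {e}) ⟨fun b ha => hspan_two e hec ha⟩ _]
      exact Ideal.mem_span_singleton'.mpr ⟨1, one_mul e⟩, he0⟩
    rw [hT₁, @Ideal.mem_toTwoSided R _ (Ideal.span {f}) ⟨fun b ha => hspan_two f hfc ha⟩ _] at h₁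
    rw [hT₂, @Ideal.mem_toTwoSided R _ (Ideal.span {e}) ⟨fun b ha => hspan_two e hec ha⟩ _] at h₂
    obtain ⟨r₁, hr₁⟩ := Ideal.mem_span_singleton'.mp h₁
    obtain ⟨r₂, hr₂⟩ := Ideal.mem_span_singleton'.mp h₂
    -- hr₁ : r₁ * f = y₁ * (t₁ * p + q) - 1
    set t : R := e * t₁ + f * t₂ with htdef
    set x : R := t * p + q with hxdef
    refine ⟨t, ?_⟩
    have hd1 : x = (t₁ * p + q) + f * ((t₂ - t₁) * p) := by
      rw [hxdef, htdef, hfdef]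
      noncomm_ring
    have hd2 : x = (t₂ * p + q) + e * ((t₁ - t₂) * p) := by
      rw [hxdef, htdef, hfdef]
      noncomm_ring
    have hez : ∀ z : R, e * (y₁ * (f * z)) = 0 := by
      intro z
      have : e * (y₁ * (f * z)) = ((e * y₁) * f) * z := by simp only [mul_assoc]
      rw [this, hec y₁, mul_assoc y₁ e f, hef, mul_zero, zero_mul]
    have hfz : ∀ z : R, f * (y₂ * (e * z)) = 0 := by
      intro z
      have : f * (y₂ * (e * z)) = ((f * y₂) * e) * z := by simp only [mul_assoc]
      rw [this, hfc y₂, mul_assoc y₂ f e, hfe, mul_zero, zero_mul]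
    have hex : e * (y₁ * x) = e := by
      rw [hd1, mul_add, mul_add, hez]
      have hy₁ : y₁ * (t₁ * p + q) = 1 + r₁ * f := by
        rw [hr₁]; abel
      rw [hy₁, mul_add, mul_one, ← mul_assoc, hec r₁, mul_assoc, hef, mul_zero, add_zero,
        add_zero]
    have hfx : f * (y₂ * x) = f := by
      rw [hd2, mul_add, mul_add, hfz]
      have hy₂ : y₂ * (t₂ * p + q) = 1 + r₂ * e := by
        rw [hr₂]; abel
      rw [hy₂, mul_add, mul_one, ← mul_assoc, hfc r₂, mul_assoc, hfe, mul_zero, add_zero,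
        add_zero]
    have hzx : (e * y₁ + f * y₂) * x = 1 := by
      rw [add_mul, mul_assoc, mul_assoc, hex, hfx, hfdef]
      abel
    exact finUnit hzx
  · push_neg at hcen
    have hcen' : ∀ e : R, IsIdempotentElem e → (∀ r : R, e * r = r * e) → e = 0 ∨ e = 1 := by
      intro e h1 h2
      by_cases h : e = 0
      · exact Or.inl h
      · exact Or.inr (hcen e h1 h2 h)
    by_cases hJ : Ideal.jacobson (⊥ : Ideal R) = ⊥
    · exact caseC hJ hcen' p q a b hab
    · -- quotient by the Jacobson radical
      set T : TwoSidedIdeal R := TwoSidedIdeal.jacobson ⊥ with hT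
      have hmemT : ∀ x : R, x ∈ T ↔ x ∈ Ideal.jacobson (⊥ : Ideal R) := by
        intro x
        have h1 : x ∈ T ↔ x ∈ TwoSidedIdeal.asIdeal T := (TwoSidedIdeal.mem_asIdeal).symm
        rw [h1, hT, TwoSidedIdeal.asIdeal_jacobson]
        have hbot : TwoSidedIdeal.asIdeal (⊥ : TwoSidedIdeal R) = (⊥ : Ideal R) := by
          ext z
          rw [TwoSidedIdeal.mem_asIdeal, TwoSidedIdeal.mem_bot, Submodule.mem_bot]
        rw [hbot]
      obtain ⟨j, hjJ, hj0⟩ := Submodule.exists_mem_ne_zero_of_ne_bot hJ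
      obtain ⟨t, y, hty⟩ := step T ⟨j, (hmemT j).mpr hjJ, hj0⟩
      rw [hmemT] at hty
      refine ⟨t, ?_⟩
      have h1 : y * (t * p + q) = 1 + (y * (t * p + q) - 1) := by abel
      have hu : IsUnit (y * (t * p + q)) := by
        rw [h1]
        exact jacUnit hty
      obtain ⟨v, hv⟩ := hu
      have : (↑v⁻¹ * y) * (t * p + q) = 1 := by
        rw [mul_assoc, ← hv, Units.inv_mul]
      exact finUnit this

end FiniteStableRangeAux

/-- Every finite ring has (left) stable range 1: if `Rp + Rq = R` then there is `t`
with `tp + q` a unit. -/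
theorem finite_ring_stable_range_one {R : Type*} [Ring R] [Finite R] (p q : R)
    (h : Ideal.span {p} ⊔ Ideal.span {q} = ⊤) :
    ∃ t : R, IsUnit (t * p + q) := by
  have h1 : (1 : R) ∈ Ideal.span {p} ⊔ Ideal.span {q} := h ▸ Submodule.mem_top
  obtain ⟨y, hy, z, hz, hyz⟩ := Submodule.mem_sup.mp h1
  obtain ⟨a, ha⟩ := Ideal.mem_span_singleton'.mp hy
  obtain ⟨b, hb⟩ := Ideal.mem_span_singleton'.mp hz
  exact FiniteStableRangeAux.master (Nat.card R) R rfl p q a b (by rw [ha, hb, hyz])
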